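/- Fix r > 0 and real numbers θ_l < θ_c < θ_r with −√(2r) < θ_l and θ_r < √(2r). Then, as λ → ∞, λ^{4/3} · λ^{-7/3} (λ + λ^{-1/3} r)³ · Δ( λ/(λ + λ^{-1/3} r), λ^{-2/3}(θ_l, θ_c, θ_r) ) converges to (1/4)·(θ_c − θ_l)(θ_r − θ_c)(θ_r − θ_l). In particular, for all sufficiently large λ the indicator in Δ is equal to 1. -/

import Mathlib

open Real Filter

/-- `Δ(x, (φl, φc, φr))`: twice the area of the simplex spanned by the three unit vectors in
directions `φl, φc, φr`, with the indicator `1{−arccos x < φl < φc < φr < arccos x}`. -/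
noncomputable def DeltaFn (x φl φc φr : ℝ) : ℝ :=
  2 * |Real.sin ((φc - φr) / 2) * Real.sin ((φr - φl) / 2) * Real.sin ((φc - φl) / 2)| *
    (if -Real.arccos x < φl ∧ φl < φc ∧ φc < φr ∧ φr < Real.arccos x then 1 else 0)

lemma aux_sin (d : ℝ) :
    Tendsto (fun lam : ℝ => lam ^ ((2:ℝ)/3) * Real.sin (lam ^ (-(2:ℝ)/3) * d / 2)) atTop
      (nhds (d / 2)) := by
  have hderiv : HasDerivAt (fun t : ℝ => Real.sin (t * d / 2)) (d / 2) 0 := by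
    have h1 : HasDerivAt (fun t : ℝ => t * d / 2) (d / 2) 0 := by
      simpa using ((hasDerivAt_id (0:ℝ)).mul_const d).div_const 2
    have h2 := (Real.hasDerivAt_sin ((0:ℝ) * d / 2)).comp 0 h1
    simpa [Function.comp_def] using h2
  have hslope := hasDerivAt_iff_tendsto_slope.mp hderiv
  have hto : Tendsto (fun lam : ℝ => lam ^ (-(2:ℝ)/3)) atTop (nhdsWithin (0:ℝ) {(0:ℝ)}ᶜ) := by
    apply tendsto_nhdsWithin_of_tendsto_nhds_of_eventually_within
    · simpa [neg_div] using tendsto_rpow_neg_atTop (show (0:ℝ) < 2/3 by norm_num)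
    · filter_upwards [eventually_gt_atTop 0] with lam hlam
      simpa using (Real.rpow_pos_of_pos hlam (-(2:ℝ)/3)).ne'
  have h := hslope.comp hto
  refine Tendsto.congr' ?_ h
  filter_upwards [eventually_gt_atTop 0] with lam hlam
  have ht : 0 < lam ^ (-(2:ℝ)/3) := Real.rpow_pos_of_pos hlam _
  have hinv : (lam ^ (-(2:ℝ)/3))⁻¹ = lam ^ ((2:ℝ)/3) := by
    rw [show (-(2:ℝ)/3) = -((2:ℝ)/3) by norm_num, Real.rpow_neg hlam.le, inv_inv]
  simp only [Function.comp_def, slope_def_field]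
  rw [div_eq_mul_inv]
  simp [hinv, mul_comm]

lemma aux_arccos (r θ : ℝ) (hr : 0 < r) (hθ : θ < Real.sqrt (2*r)) :
    ∀ᶠ lam : ℝ in atTop,
      lam ^ (-(2:ℝ)/3) * θ < Real.arccos (lam / (lam + lam ^ (-(1:ℝ)/3) * r)) := by
  rcases le_or_gt θ 0 with hθ0 | hθ0
  · filter_upwards [eventually_gt_atTop 0] with lam hlam
    have ht : 0 < lam ^ (-(2:ℝ)/3) := Real.rpow_pos_of_pos hlam _
    have hrp : 0 < lam ^ (-(1:ℝ)/3) * r := mul_pos (Real.rpow_pos_of_pos hlam _) hr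
    have hx1 : lam / (lam + lam ^ (-(1:ℝ)/3) * r) < 1 := by
      rw [div_lt_one (by linarith)]; linarith
    have h1 : lam ^ (-(2:ℝ)/3) * θ ≤ 0 :=
      mul_nonpos_iff.mpr (Or.inl ⟨ht.le, hθ0⟩)
    exact lt_of_le_of_lt h1 (Real.arccos_pos.mpr hx1)
  · have hθ2 : θ ^ 2 < 2 * r := (Real.lt_sqrt hθ0.le).mp hθ
    have hc : 0 < r - θ ^ 2 / 2 := by linarith
    have hto : Tendsto (fun lam : ℝ => lam ^ (-(2:ℝ)/3)) atTop (nhds 0) := by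
      simpa [neg_div] using tendsto_rpow_neg_atTop (show (0:ℝ) < 2/3 by norm_num)
    have ev1 : ∀ᶠ lam : ℝ in atTop, lam ^ (-(2:ℝ)/3) * θ ≤ 1 := by
      have h := hto.mul_const θ
      simp only [zero_mul] at h
      exact h.eventually (eventually_le_nhds one_pos)
    have ev2 : ∀ᶠ lam : ℝ in atTop,
        (lam ^ (-(2:ℝ)/3)) ^ 2 * (r * θ ^ 2 / 2) ≤ r - θ ^ 2 / 2 := by
      have h := (hto.pow 2).mul_const (r * θ ^ 2 / 2)
      simp only [ne_eq, OfNat.ofNat_ne_zero, not_false_eq_true, zero_pow, zero_mul] at h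
      exact h.eventually (eventually_le_nhds hc)
    filter_upwards [eventually_gt_atTop 0, ev1, ev2] with lam hlam h1 h2
    set t := lam ^ (-(2:ℝ)/3) with ht_def
    have ht : 0 < t := Real.rpow_pos_of_pos hlam _
    have e2 : t ^ 2 = lam ^ (-(4:ℝ)/3) := by
      rw [ht_def, ← Real.rpow_natCast (lam ^ (-(2:ℝ)/3)) 2, ← Real.rpow_mul hlam.le]
      norm_num
    have e1 : lam * lam ^ (-(4:ℝ)/3) = lam ^ (-(1:ℝ)/3) := by
      nth_rewrite 1 [← Real.rpow_one lam]
      rw [← Real.rpow_add hlam]; norm_num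
    have hxeq : lam / (lam + lam ^ (-(1:ℝ)/3) * r) = 1 / (1 + t ^ 2 * r) := by
      rw [e2, ← e1, div_eq_div_iff (by positivity) (by positivity)]; ring
    have hx1 : 1 / (1 + t ^ 2 * r) < 1 := by
      rw [div_lt_one (by positivity)]
      nlinarith [mul_pos (pow_pos ht 2) hr]
    have hx0 : (0:ℝ) < 1 / (1 + t ^ 2 * r) := by positivity
    have hcos : 1 / (1 + t ^ 2 * r) < Real.cos (t * θ) := by
      have hb := Real.one_sub_sq_div_two_lt_cos (x := t * θ) (mul_pos ht hθ0).ne'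
      have hle : 1 / (1 + t ^ 2 * r) ≤ 1 - (t * θ) ^ 2 / 2 := by
        rw [div_le_iff₀ (by positivity)]
        nlinarith [mul_le_mul_of_nonneg_left h2 (sq_nonneg t)]
      linarith
    rw [hxeq]
    have hmemu : t * θ ∈ Set.Icc 0 π :=
      ⟨by positivity, h1.trans (by linarith [Real.pi_gt_three])⟩
    have hmema : Real.arccos (1 / (1 + t ^ 2 * r)) ∈ Set.Icc 0 π :=
      ⟨Real.arccos_nonneg _, Real.arccos_le_pi _⟩
    refine (Real.strictAntiOn_cos.lt_iff_gt hmema hmemu).mp ?_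
    rw [Real.cos_arccos (by linarith) hx1.le]
    exact hcos

/-- As `λ → ∞`,
`λ^{4/3} · λ^{-7/3} (λ + λ^{-1/3} r)³ · Δ(λ/(λ + λ^{-1/3} r), λ^{-2/3} θ)` converges to
`(1/4)(θc − θl)(θr − θc)(θr − θl)`, and for all sufficiently large `λ` the indicator
appearing in `Δ` is equal to `1`. -/
theorem DeltaFn_tendsto (r θl θc θr : ℝ) (hr : 0 < r) (hlc : θl < θc) (hcr : θc < θr)
    (hl : -Real.sqrt (2 * r) < θl) (hrr : θr < Real.sqrt (2 * r)) :
    Tendsto (fun lam : ℝ =>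
        lam ^ ((4 : ℝ) / 3) * (lam ^ (-(7 : ℝ) / 3) * (lam + lam ^ (-(1 : ℝ) / 3) * r) ^ 3 *
          DeltaFn (lam / (lam + lam ^ (-(1 : ℝ) / 3) * r))
            (lam ^ (-(2 : ℝ) / 3) * θl) (lam ^ (-(2 : ℝ) / 3) * θc) (lam ^ (-(2 : ℝ) / 3) * θr)))
      atTop (nhds (1 / 4 * (θc - θl) * (θr - θc) * (θr - θl))) ∧
    ∀ᶠ lam : ℝ in atTop,
      -Real.arccos (lam / (lam + lam ^ (-(1 : ℝ) / 3) * r)) < lam ^ (-(2 : ℝ) / 3) * θl ∧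
      lam ^ (-(2 : ℝ) / 3) * θl < lam ^ (-(2 : ℝ) / 3) * θc ∧
      lam ^ (-(2 : ℝ) / 3) * θc < lam ^ (-(2 : ℝ) / 3) * θr ∧
      lam ^ (-(2 : ℝ) / 3) * θr < Real.arccos (lam / (lam + lam ^ (-(1 : ℝ) / 3) * r)) := by
  have h2 : ∀ᶠ lam : ℝ in atTop,
      -Real.arccos (lam / (lam + lam ^ (-(1 : ℝ) / 3) * r)) < lam ^ (-(2 : ℝ) / 3) * θl ∧
      lam ^ (-(2 : ℝ) / 3) * θl < lam ^ (-(2 : ℝ) / 3) * θc ∧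
      lam ^ (-(2 : ℝ) / 3) * θc < lam ^ (-(2 : ℝ) / 3) * θr ∧
      lam ^ (-(2 : ℝ) / 3) * θr < Real.arccos (lam / (lam + lam ^ (-(1 : ℝ) / 3) * r)) := by
    have hA := aux_arccos r θr hr hrr
    have hB := aux_arccos r (-θl) hr (by linarith)
    filter_upwards [hA, hB, eventually_gt_atTop 0] with lam hA' hB' hlam
    have ht : 0 < lam ^ (-(2:ℝ)/3) := Real.rpow_pos_of_pos hlam _
    have hB'' : -(lam ^ (-(2:ℝ)/3) * θl) < Real.arccos (lam / (lam + lam ^ (-(1:ℝ)/3) * r)) := by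
      have : lam ^ (-(2:ℝ)/3) * (-θl) = -(lam ^ (-(2:ℝ)/3) * θl) := by ring
      linarith [this ▸ hB']
    exact ⟨by linarith, mul_lt_mul_of_pos_left hlc ht, mul_lt_mul_of_pos_left hcr ht, hA'⟩
  refine ⟨?_, h2⟩
  have hS1 := aux_sin (θc - θr)
  have hS2 := aux_sin (θr - θl)
  have hS3 := aux_sin (θc - θl)
  have hpow : Tendsto (fun lam : ℝ => (1 + lam ^ (-(4:ℝ)/3) * r) ^ 3) atTop (nhds 1) := by
    have h0 : Tendsto (fun lam : ℝ => lam ^ (-(4:ℝ)/3)) atTop (nhds 0) := by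
      simpa [neg_div] using tendsto_rpow_neg_atTop (show (0:ℝ) < 4/3 by norm_num)
    have h := ((tendsto_const_nhds (x := (1:ℝ))).add (h0.mul_const r)).pow 3
    simpa using h
  have h := hpow.mul ((((hS1.mul hS2).mul hS3).abs).const_mul 2)
  have hnp : (θc - θr) / 2 * ((θr - θl) / 2) * ((θc - θl) / 2) ≤ 0 := by
    have hBC : (0:ℝ) ≤ (θr - θl) / 2 * ((θc - θl) / 2) :=
      mul_nonneg (by linarith) (by linarith)
    nlinarith [hBC, hcr]
  have hL : (1:ℝ) * (2 * |(θc - θr) / 2 * ((θr - θl) / 2) * ((θc - θl) / 2)|) =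
      1 / 4 * (θc - θl) * (θr - θc) * (θr - θl) := by
    rw [abs_of_nonpos hnp]; ring
  rw [hL] at h
  refine Tendsto.congr' ?_ h
  filter_upwards [eventually_gt_atTop 0, h2] with lam hlam hind
  have hx : 0 < lam ^ ((2:ℝ)/3) := Real.rpow_pos_of_pos hlam _
  simp only [DeltaFn, if_pos hind]
  rw [show (lam ^ (-(2:ℝ)/3) * θc - lam ^ (-(2:ℝ)/3) * θr) / 2
      = lam ^ (-(2:ℝ)/3) * (θc - θr) / 2 by ring,
    show (lam ^ (-(2:ℝ)/3) * θr - lam ^ (-(2:ℝ)/3) * θl) / 2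
      = lam ^ (-(2:ℝ)/3) * (θr - θl) / 2 by ring,
    show (lam ^ (-(2:ℝ)/3) * θc - lam ^ (-(2:ℝ)/3) * θl) / 2
      = lam ^ (-(2:ℝ)/3) * (θc - θl) / 2 by ring]
  rw [show lam ^ ((2:ℝ)/3) * Real.sin (lam ^ (-(2:ℝ)/3) * (θc - θr) / 2) *
        (lam ^ ((2:ℝ)/3) * Real.sin (lam ^ (-(2:ℝ)/3) * (θr - θl) / 2)) *
        (lam ^ ((2:ℝ)/3) * Real.sin (lam ^ (-(2:ℝ)/3) * (θc - θl) / 2))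
      = (lam ^ ((2:ℝ)/3)) ^ 3 *
        (Real.sin (lam ^ (-(2:ℝ)/3) * (θc - θr) / 2) *
          Real.sin (lam ^ (-(2:ℝ)/3) * (θr - θl) / 2) *
          Real.sin (lam ^ (-(2:ℝ)/3) * (θc - θl) / 2)) by ring,
    abs_mul, abs_of_pos (pow_pos hx 3)]
  set P := |Real.sin (lam ^ (-(2:ℝ)/3) * (θc - θr) / 2) *
      Real.sin (lam ^ (-(2:ℝ)/3) * (θr - θl) / 2) *
      Real.sin (lam ^ (-(2:ℝ)/3) * (θc - θl) / 2)| with hP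
  have e1 : lam * lam ^ (-(4:ℝ)/3) = lam ^ (-(1:ℝ)/3) := by
    nth_rewrite 1 [← Real.rpow_one lam]
    rw [← Real.rpow_add hlam]; norm_num
  have e3 : (lam ^ ((2:ℝ)/3)) ^ (3:ℕ) = lam ^ (2:ℕ) := by
    rw [← Real.rpow_natCast (lam ^ ((2:ℝ)/3)) 3, ← Real.rpow_mul hlam.le,
      ← Real.rpow_natCast lam 2]
    norm_num
  have key : lam ^ ((4:ℝ)/3) * lam ^ (-(7:ℝ)/3) * lam ^ (3:ℕ) = lam ^ (2:ℕ) := by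
    rw [← Real.rpow_add hlam, show (4:ℝ)/3 + -(7:ℝ)/3 = -1 by norm_num,
      Real.rpow_neg_one]
    field_simp
  rw [← e1, e3]
  linear_combination (-((1 + lam ^ (-(4:ℝ)/3) * r) ^ 3 * (2 * P))) * key
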